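/- The deterministic reachability-regular PA recognizable languages are not closed under union: L₁ = {ucα | u ∈ {a,b,c}*, |u|_a = |u|_b, |α|_c = ∞} and L₂ = {vaβ | v ∈ {a,b,c}*, |v|_b = |v|_c, |β|_a = ∞} are each deterministic reachability-regular PA recognizable, but L₁ ∪ L₂ is not. -/

import Mathlib

/-! Common definitions: semi-linear sets, Parikh automata on finite and infinite words. -/

/-- The linear set with base vector `b` and finite set `P` of period vectors. -/
def LinSet {d : ℕ} {M : Type} [AddCommMonoid M] (b : Fin d → M)
    (P : Finset (Fin d → M)) : Set (Fin d → M) :=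
  {v | ∃ z : (Fin d → M) → ℕ, v = b + ∑ p ∈ P, z p • p}

/-- A set is semi-linear if it is a finite union of linear sets. -/
def SemiLin {d : ℕ} {M : Type} [AddCommMonoid M] (S : Set (Fin d → M)) : Prop :=
  ∃ (n : ℕ) (b : Fin n → Fin d → M) (P : Fin n → Finset (Fin d → M)),
    S = ⋃ i, LinSet (b i) (P i)

/-- The length-`n` prefix of an infinite word. -/
def pref {S : Type} (α : ℕ → S) (n : ℕ) : List S := List.ofFn fun i : Fin n => α i.1

/-- An infinite word is ultimately periodic if it has the form `u v^ω`. -/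
def UltimatelyPeriodic {S : Type} (α : ℕ → S) : Prop :=
  ∃ n p, 0 < p ∧ ∀ i, n ≤ i → α (i + p) = α i

/-- The finite infix `α[m+1 : n]` (0-indexed positions `m, …, n-1`). -/
def infixSeg {S : Type} (α : ℕ → S) (m n : ℕ) : List S :=
  List.ofFn fun j : Fin (n - m) => α (m + j.1)

/-- `W^ω`: infinite concatenations of non-empty words from `W`. -/
def omegaPow {S : Type} (W : Set (List S)) : Set (ℕ → S) :=
  {α | ∃ k : ℕ → ℕ, k 0 = 0 ∧ StrictMono k ∧ ∀ i, infixSeg α (k i) (k (i + 1)) ∈ W}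

/-- A deterministic Parikh automaton with states `Q`, alphabet `S`, dimension `d`,
and a constraint set `C` of vectors over `M` (`M = ℕ`, or `M = ℕ∞` for limit PA). -/
structure DetPA (Q S : Type) (d : ℕ) (M : Type) where
  init : Q
  trans : Q → S → (Fin d → ℕ) × Q
  acc : Q → Prop
  C : Set (Fin d → M)

namespace DetPA

variable {Q S M : Type} {d : ℕ}

/-- The run of `A` from state `p` on the infinite word `α`: state after `i` letters. -/
def run (A : DetPA Q S d M) (p : Q) (α : ℕ → S) : ℕ → Q
  | 0 => p
  | i + 1 => (A.trans (A.run p α i) (α i)).2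

/-- The state of the unique run of `A` on `α` after `i` letters. -/
def stateAt (A : DetPA Q S d M) (α : ℕ → S) : ℕ → Q := A.run A.init α

/-- The vector of the `i`-th transition of the unique run of `A` on `α`. -/
def step (A : DetPA Q S d M) (α : ℕ → S) (i : ℕ) : Fin d → ℕ :=
  (A.trans (A.stateAt α i) (α i)).1

/-- Sum of transition vectors of the run of `A` on `α` on positions `m, …, n-1`. -/
def vecSum (A : DetPA Q S d M) (α : ℕ → S) (m n : ℕ) : Fin d → ℕ :=
  ∑ i ∈ Finset.Ico m n, A.step α i

/-- The state reached when reading a finite word from state `p`. -/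
def runList (A : DetPA Q S d M) : Q → List S → Q
  | p, [] => p
  | p, a :: w => A.runList (A.trans p a).2 w

/-- The sum of transition vectors collected when reading a finite word from state `p`. -/
def sumList (A : DetPA Q S d M) : Q → List S → (Fin d → ℕ)
  | _, [] => 0
  | p, a :: w => (A.trans p a).1 + A.sumList (A.trans p a).2 w

/-- Finite-word acceptance: end in an accepting state with vector sum in `C`. -/
def AcceptsWord (A : DetPA Q S d ℕ) (w : List S) : Prop :=
  A.acc (A.runList A.init w) ∧ A.sumList A.init w ∈ A.C

/-- The run visits accepting states infinitely often. -/
def InfAcc (A : DetPA Q S d M) (α : ℕ → S) : Prop :=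
  ∀ n, ∃ i, n ≤ i ∧ A.acc (A.stateAt α i)

/-- Reachability condition. -/
def ReachAccept (A : DetPA Q S d ℕ) (α : ℕ → S) : Prop :=
  ∃ i, 1 ≤ i ∧ A.acc (A.stateAt α i) ∧ A.vecSum α 0 i ∈ A.C

/-- Reachability-regular condition. -/
def ReachRegAccept (A : DetPA Q S d ℕ) (α : ℕ → S) : Prop :=
  A.ReachAccept α ∧ A.InfAcc α

/-- Büchi condition. -/
def BuchiAccept (A : DetPA Q S d ℕ) (α : ℕ → S) : Prop :=
  ∀ n, ∃ i, n ≤ i ∧ 1 ≤ i ∧ A.acc (A.stateAt α i) ∧ A.vecSum α 0 i ∈ A.C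

/-- Weak reset condition. -/
def WeakResetAccept (A : DetPA Q S d ℕ) (α : ℕ → S) : Prop :=
  ∃ k : ℕ → ℕ, k 0 = 0 ∧ StrictMono k ∧
    (∀ i, A.acc (A.stateAt α (k (i + 1)))) ∧
    (∀ i, A.vecSum α (k i) (k (i + 1)) ∈ A.C)

/-- Strong reset condition: accepting states occur infinitely often, and between any
two consecutive accepting positions (and from position `0` to the first one) the
collected vector lies in `C`. -/
def StrongResetAccept (A : DetPA Q S d ℕ) (α : ℕ → S) : Prop :=
  (∀ n, ∃ i, n ≤ i ∧ 1 ≤ i ∧ A.acc (A.stateAt α i)) ∧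
  ∀ m n, m < n → (m = 0 ∨ (1 ≤ m ∧ A.acc (A.stateAt α m))) →
    A.acc (A.stateAt α n) →
    (∀ j, m < j → j < n → ¬ A.acc (A.stateAt α j)) →
    A.vecSum α m n ∈ A.C

/-- The extended Parikh image of the unique run of `A` on `α`: componentwise the
supremum in `ℕ∞` of the partial sums (`∞` iff the component is incremented
infinitely often, else the finite total sum). -/
noncomputable def limImage (A : DetPA Q S d M) (α : ℕ → S) : Fin d → ℕ∞ :=
  fun j => ⨆ n, (A.vecSum α 0 n j : ℕ∞)

/-- Limit condition. -/
def LimitAccept (A : DetPA Q S d ℕ∞) (α : ℕ → S) : Prop :=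
  A.InfAcc α ∧ A.limImage α ∈ A.C

end DetPA

/-- `U` is recognized by a deterministic finite-word Parikh automaton. -/
def DetPARecogFin {S : Type} (U : Set (List S)) : Prop :=
  ∃ (d : ℕ) (Q : Type) (_ : Finite Q) (A : DetPA Q S d ℕ),
    SemiLin A.C ∧ U = {w | A.AcceptsWord w}

/-- `L` is recognized by a deterministic reachability PA. -/
def DetReachRecog {S : Type} (L : Set (ℕ → S)) : Prop :=
  ∃ (d : ℕ) (Q : Type) (_ : Finite Q) (A : DetPA Q S d ℕ),
    SemiLin A.C ∧ L = {α | A.ReachAccept α}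

/-- `L` is recognized by a deterministic reachability-regular PA. -/
def DetReachRegRecog {S : Type} (L : Set (ℕ → S)) : Prop :=
  ∃ (d : ℕ) (Q : Type) (_ : Finite Q) (A : DetPA Q S d ℕ),
    SemiLin A.C ∧ L = {α | A.ReachRegAccept α}

/-- `L` is recognized by a deterministic Büchi PA. -/
def DetBuchiRecog {S : Type} (L : Set (ℕ → S)) : Prop :=
  ∃ (d : ℕ) (Q : Type) (_ : Finite Q) (A : DetPA Q S d ℕ),
    SemiLin A.C ∧ L = {α | A.BuchiAccept α}

/-- `L` is recognized by a deterministic weak reset PA. -/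
def DetWeakResetRecog {S : Type} (L : Set (ℕ → S)) : Prop :=
  ∃ (d : ℕ) (Q : Type) (_ : Finite Q) (A : DetPA Q S d ℕ),
    SemiLin A.C ∧ L = {α | A.WeakResetAccept α}

/-- `L` is recognized by a deterministic strong reset PA. -/
def DetStrongResetRecog {S : Type} (L : Set (ℕ → S)) : Prop :=
  ∃ (d : ℕ) (Q : Type) (_ : Finite Q) (A : DetPA Q S d ℕ),
    SemiLin A.C ∧ L = {α | A.StrongResetAccept α}

/-- `L` is recognized by a deterministic limit PA (constraint set over `ℕ∞`). -/
def DetLimitRecog {S : Type} (L : Set (ℕ → S)) : Prop :=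
  ∃ (d : ℕ) (Q : Type) (_ : Finite Q) (A : DetPA Q S d ℕ∞),
    SemiLin A.C ∧ L = {α | A.LimitAccept α}

/-- A nondeterministic Parikh automaton. -/
structure NPA (Q S : Type) (d : ℕ) where
  init : Q
  trans : Q → S → (Fin d → ℕ) → Q → Prop
  acc : Q → Prop
  C : Set (Fin d → ℕ)

namespace NPA

variable {Q S : Type} {d : ℕ}

/-- `r, v` form a run of `A` on the infinite word `α`. -/
def IsRun (A : NPA Q S d) (α : ℕ → S) (r : ℕ → Q) (v : ℕ → Fin d → ℕ) : Prop :=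
  r 0 = A.init ∧ ∀ i, A.trans (r i) (α i) (v i) (r (i + 1))

/-- Partial sums of the vectors of a run over positions `m, …, n-1`. -/
def partSum (v : ℕ → Fin d → ℕ) (m n : ℕ) : Fin d → ℕ := ∑ i ∈ Finset.Ico m n, v i

/-- Nondeterministic reachability-regular acceptance. -/
def ReachRegAccept (A : NPA Q S d) (α : ℕ → S) : Prop :=
  ∃ r v, A.IsRun α r v ∧ (∃ i, 1 ≤ i ∧ A.acc (r i) ∧ partSum v 0 i ∈ A.C) ∧
    ∀ n, ∃ i, n ≤ i ∧ A.acc (r i)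

/-- Nondeterministic strong reset acceptance. -/
def StrongResetAccept (A : NPA Q S d) (α : ℕ → S) : Prop :=
  ∃ r v, A.IsRun α r v ∧
    (∀ n, ∃ i, n ≤ i ∧ 1 ≤ i ∧ A.acc (r i)) ∧
    ∀ m n, m < n → (m = 0 ∨ (1 ≤ m ∧ A.acc (r m))) → A.acc (r n) →
      (∀ j, m < j → j < n → ¬ A.acc (r j)) → partSum v m n ∈ A.C

/-- Nondeterministic weak reset acceptance. -/
def WeakResetAccept (A : NPA Q S d) (α : ℕ → S) : Prop :=
  ∃ r v, A.IsRun α r v ∧ ∃ k : ℕ → ℕ, k 0 = 0 ∧ StrictMono k ∧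
    (∀ i, A.acc (r (k (i + 1)))) ∧ (∀ i, partSum v (k i) (k (i + 1)) ∈ A.C)

/-- Runs of a nondeterministic PA on a finite word, from state `p` to state `q`
collecting vector sum `v`. -/
def ListRun (A : NPA Q S d) : Q → List S → (Fin d → ℕ) → Q → Prop
  | p, [], v, q => q = p ∧ v = 0
  | p, a :: w, v, q => ∃ u p', A.trans p a u p' ∧ ∃ v', A.ListRun p' w v' q ∧ v = u + v'

/-- Finite-word acceptance for a nondeterministic PA. -/
def AcceptsWord (A : NPA Q S d) (w : List S) : Prop :=
  ∃ v q, A.ListRun A.init w v q ∧ A.acc q ∧ v ∈ A.C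

end NPA

/-- `L` is recognized by a (nondeterministic) reachability-regular PA. -/
def NPAReachRegRecog {S : Type} (L : Set (ℕ → S)) : Prop :=
  ∃ (d : ℕ) (Q : Type) (_ : Finite Q) (A : NPA Q S d),
    SemiLin A.C ∧ L = {α | A.ReachRegAccept α}

/-- `L` is recognized by a (nondeterministic) strong reset PA. -/
def NPAStrongResetRecog {S : Type} (L : Set (ℕ → S)) : Prop :=
  ∃ (d : ℕ) (Q : Type) (_ : Finite Q) (A : NPA Q S d),
    SemiLin A.C ∧ L = {α | A.StrongResetAccept α}

/-- `L` is recognized by a (nondeterministic) weak reset PA. -/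
def NPAWeakResetRecog {S : Type} (L : Set (ℕ → S)) : Prop :=
  ∃ (d : ℕ) (Q : Type) (_ : Finite Q) (A : NPA Q S d),
    SemiLin A.C ∧ L = {α | A.WeakResetAccept α}

/-- A nondeterministic Büchi automaton. -/
structure NBA (Q S : Type) where
  init : Q
  trans : Q → S → Q → Prop
  acc : Q → Prop

/-- Büchi acceptance. -/
def NBA.Accepts {Q S : Type} (B : NBA Q S) (α : ℕ → S) : Prop :=
  ∃ r : ℕ → Q, r 0 = B.init ∧ (∀ i, B.trans (r i) (α i) (r (i + 1))) ∧
    ∀ n, ∃ i, n ≤ i ∧ B.acc (r i)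

/-- `L` is ω-regular: recognized by a nondeterministic Büchi automaton. -/
def OmegaRegular {S : Type} (L : Set (ℕ → S)) : Prop :=
  ∃ (Q : Type) (_ : Finite Q) (B : NBA Q S), L = {α | B.Accepts α}

/-- `L₁ = {u c α | u ∈ {a,b,c}*, |u|_a = |u|_b, |α|_c = ∞}` over `Fin 3`
(`a := 0`, `b := 1`, `c := 2`). -/
def L14a : Set (ℕ → Fin 3) :=
  {β | ∃ n, β n = 2 ∧ (pref β n).count 0 = (pref β n).count 1 ∧
    ∀ m, ∃ i, m ≤ i ∧ β i = 2}

/-- `L₂ = {v a β | v ∈ {a,b,c}*, |v|_b = |v|_c, |β|_a = ∞}`. -/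
def L14b : Set (ℕ → Fin 3) :=
  {β | ∃ n, β n = 0 ∧ (pref β n).count 1 = (pref β n).count 2 ∧
    ∀ m, ∃ i, m ≤ i ∧ β i = 0}

/-! ### Auxiliary lemmas -/

section AutoAux

variable {Q S : Type} {d : ℕ}

lemma run_succ (A : DetPA Q S d ℕ) (p : Q) (α : ℕ → S) (i : ℕ) :
    A.run p α (i + 1) = (A.trans (A.run p α i) (α i)).2 := rfl

lemma stateAt_succ (A : DetPA Q S d ℕ) (α : ℕ → S) (i : ℕ) :
    A.stateAt α (i + 1) = (A.trans (A.stateAt α i) (α i)).2 := rfl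

lemma vecSum_succ (A : DetPA Q S d ℕ) (α : ℕ → S) (n : ℕ) :
    A.vecSum α 0 (n + 1) = A.vecSum α 0 n + A.step α n := by
  unfold DetPA.vecSum
  rw [Finset.sum_Ico_succ_top (Nat.zero_le n)]

lemma stateAt_congr (A : DetPA Q S d ℕ) {α α' : ℕ → S} {n : ℕ}
    (h : ∀ i, i < n → α i = α' i) : ∀ m, m ≤ n → A.stateAt α m = A.stateAt α' m := by
  intro m
  induction m with
  | zero => intro _; rfl
  | succ m ih =>
    intro hm
    rw [stateAt_succ, stateAt_succ, ih (by omega), h m (by omega)]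

lemma vecSum_congr (A : DetPA Q S d ℕ) {α α' : ℕ → S} {n : ℕ}
    (h : ∀ i, i < n → α i = α' i) {m : ℕ} (hm : m ≤ n) :
    A.vecSum α 0 m = A.vecSum α' 0 m := by
  unfold DetPA.vecSum
  refine Finset.sum_congr rfl ?_
  intro i hi
  rw [Finset.mem_Ico] at hi
  unfold DetPA.step
  rw [stateAt_congr A h i (by omega), h i (by omega)]

lemma stateAt_block (A : DetPA Q S d ℕ) {α : ℕ → S} {x : S} {m : ℕ} :
    ∀ k, (∀ i, m ≤ i → i < m + k → α i = x) →
    A.stateAt α (m + k) = (fun q => (A.trans q x).2)^[k] (A.stateAt α m) := by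
  intro k
  induction k with
  | zero => intro _; rfl
  | succ k ih =>
    intro h
    have : m + (k + 1) = (m + k) + 1 := by omega
    rw [this, stateAt_succ, ih (fun i h1 h2 => h i h1 (by omega)),
      h (m + k) (by omega) (by omega), Function.iterate_succ_apply']

lemma stateAt_tail (A : DetPA Q S d ℕ) {α α' : ℕ → S} {m m' : ℕ}
    (hs : A.stateAt α m = A.stateAt α' m') (h : ∀ i, α (m + i) = α' (m' + i)) :
    ∀ i, A.stateAt α (m + i) = A.stateAt α' (m' + i) := by
  intro i
  induction i with
  | zero => simpa using hs
  | succ i ih =>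
    have e1 : m + (i + 1) = (m + i) + 1 := by omega
    have e2 : m' + (i + 1) = (m' + i) + 1 := by omega
    rw [e1, e2, stateAt_succ, stateAt_succ, ih, h i]

lemma infAcc_tail (A : DetPA Q S d ℕ) {α α' : ℕ → S} {m m' : ℕ}
    (hs : A.stateAt α m = A.stateAt α' m') (h : ∀ i, α (m + i) = α' (m' + i))
    (hi : A.InfAcc α) : A.InfAcc α' := by
  intro n
  obtain ⟨i, hi1, hi2⟩ := hi (m + m' + n)
  refine ⟨m' + (i - m), by omega, ?_⟩
  rw [← stateAt_tail A hs h (i - m)]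
  have : m + (i - m) = i := by omega
  rwa [this]

lemma exists_period {Q : Type} [Finite Q] (f : Q → Q) (q : Q) :
    ∃ i p, i ≤ Nat.card Q ∧ 1 ≤ p ∧ ∀ m k, i ≤ m → f^[m + p * k] q = f^[m] q := by
  have : ∃ a b : Fin (Nat.card Q + 1), a ≠ b ∧ f^[a.1] q = f^[b.1] q := by
    have := Fintype.ofFinite Q
    apply Fintype.exists_ne_map_eq_of_card_lt (fun n : Fin (Nat.card Q + 1) => f^[n.1] q)
    simp [Nat.card_eq_fintype_card]
  obtain ⟨a, b, hab, he⟩ := this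
  rcases Nat.lt_or_ge a.1 b.1 with hlt | hge
  case _ hlt =>
    refine ⟨a.1, b.1 - a.1, by omega, by omega, ?_⟩
    have key : ∀ m, a.1 ≤ m → f^[m + (b.1 - a.1)] q = f^[m] q := by
      intro m hm
      have e : m + (b.1 - a.1) = (m - a.1) + b.1 := by omega
      rw [e, Function.iterate_add_apply, ← he, ← Function.iterate_add_apply]
      congr 1
      omega
    intro m k hm
    induction k with
    | zero => simp
    | succ k ih =>
      have e : m + (b.1 - a.1) * (k + 1) = (m + (b.1 - a.1) * k) + (b.1 - a.1) := by ring
      rw [e, key _ (by omega), ih]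
  case _ hge =>
    have hlt : b.1 < a.1 := by
      rcases Nat.lt_or_ge b.1 a.1 with h | h
      · exact h
      · exact absurd (Fin.ext (by omega)) hab
    refine ⟨b.1, a.1 - b.1, by omega, by omega, ?_⟩
    have key : ∀ m, b.1 ≤ m → f^[m + (a.1 - b.1)] q = f^[m] q := by
      intro m hm
      have e : m + (a.1 - b.1) = (m - b.1) + a.1 := by omega
      rw [e, Function.iterate_add_apply, he, ← Function.iterate_add_apply]
      congr 1
      omega
    intro m k hm
    induction k with
    | zero => simp
    | succ k ih =>
      have e : m + (a.1 - b.1) * (k + 1) = (m + (a.1 - b.1) * k) + (a.1 - b.1) := by ring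
      rw [e, key _ (by omega), ih]

end AutoAux
section CntAux

/-- Number of occurrences of `x` among the first `n` letters. -/
def cnt (x : Fin 3) (α : ℕ → Fin 3) (n : ℕ) : ℕ := (pref α n).count x

lemma pref_succ {S : Type} (α : ℕ → S) (n : ℕ) :
    pref α (n + 1) = pref α n ++ [α n] := by
  unfold pref
  rw [List.ofFn_succ']
  simp [List.concat_eq_append]

@[simp] lemma cnt_zero (x : Fin 3) (α : ℕ → Fin 3) : cnt x α 0 = 0 := rfl

lemma cnt_succ (x : Fin 3) (α : ℕ → Fin 3) (n : ℕ) :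
    cnt x α (n + 1) = cnt x α n + (if α n = x then 1 else 0) := by
  unfold cnt
  rw [pref_succ, List.count_append]
  simp [List.count_singleton]

lemma cnt_const {α : ℕ → Fin 3} {z : Fin 3} {m : ℕ} (x : Fin 3) :
    ∀ k, (∀ i, m ≤ i → i < m + k → α i = z) →
    cnt x α (m + k) = cnt x α m + (if z = x then k else 0) := by
  intro k
  induction k with
  | zero => intro _; simp
  | succ k ih =>
    intro h
    have e : m + (k + 1) = (m + k) + 1 := by omega
    rw [e, cnt_succ, ih (fun i h1 h2 => h i h1 (by omega)), h (m + k) (by omega) (by omega)]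
    by_cases hz : z = x <;> simp [hz] <;> omega

end CntAux

section WrdAux

/-- The word `b a^p b^q c^r z^ω`. -/
def wrd (p q r : ℕ) (z : Fin 3) : ℕ → Fin 3 := fun i =>
  if i = 0 then 1 else if i < 1 + p then 0 else if i < 1 + p + q then 1
  else if i < 1 + p + q + r then 2 else z

lemma wrd_at0 (p q r : ℕ) (z : Fin 3) : wrd p q r z 0 = 1 := rfl

lemma wrd_a {p q r : ℕ} {z : Fin 3} {i : ℕ} (h1 : 1 ≤ i) (h2 : i < 1 + p) :
    wrd p q r z i = 0 := by
  unfold wrd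
  rw [if_neg (by omega), if_pos h2]

lemma wrd_b {p q r : ℕ} {z : Fin 3} {i : ℕ} (h1 : 1 + p ≤ i) (h2 : i < 1 + p + q) :
    wrd p q r z i = 1 := by
  unfold wrd
  rw [if_neg (by omega), if_neg (by omega), if_pos h2]

lemma wrd_c {p q r : ℕ} {z : Fin 3} {i : ℕ} (h1 : 1 + p + q ≤ i) (h2 : i < 1 + p + q + r) :
    wrd p q r z i = 2 := by
  unfold wrd
  rw [if_neg (by omega), if_neg (by omega), if_neg (by omega), if_pos h2]

lemma wrd_z {p q r : ℕ} {z : Fin 3} {i : ℕ} (h1 : 1 + p + q + r ≤ i) :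
    wrd p q r z i = z := by
  unfold wrd
  rw [if_neg (by omega), if_neg (by omega), if_neg (by omega), if_neg (by omega)]

/-- Two `wrd` words agree up to the end of the `b`-block. -/
lemma wrd_prefix_eq {p q r r' : ℕ} {z z' : Fin 3} {i : ℕ} (h : i < 1 + p + q) :
    wrd p q r z i = wrd p q r' z' i := by
  unfold wrd
  split_ifs <;> first | rfl | omega

/-- `wrd p q 0 2` agrees with `wrd p q r' 0` before position `1+p+q+r'`. -/
lemma wrd_prefix_eq2 {p q r' : ℕ} {i : ℕ} (h : i < 1 + p + q + r') :
    wrd p q 0 2 i = wrd p q r' 0 i := by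
  by_cases h1 : i < 1 + p + q
  · exact wrd_prefix_eq h1
  · rw [wrd_z (by omega), wrd_c (by omega) h]

/-- The counts of the three letters at any position at or beyond the start of the tail. -/
lemma wrd_cnt {p q r : ℕ} {z : Fin 3} {n : ℕ} (hn : 1 + p + q + r ≤ n) :
    cnt 0 (wrd p q r z) n = p + (if z = 0 then n - (1+p+q+r) else 0) ∧
    cnt 1 (wrd p q r z) n = 1 + q + (if z = 1 then n - (1+p+q+r) else 0) ∧
    cnt 2 (wrd p q r z) n = r + (if z = 2 then n - (1+p+q+r) else 0) := by
  have h1 : ∀ x, cnt x (wrd p q r z) 1 = if (1 : Fin 3) = x then 1 else 0 := by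
    intro x
    have := cnt_succ x (wrd p q r z) 0
    refine this.trans ?_
    rw [cnt_zero, wrd_at0]
    split_ifs <;> simp_all
  have h2 : ∀ x, cnt x (wrd p q r z) (1 + p) =
      (if (1:Fin 3) = x then 1 else 0) + (if (0:Fin 3) = x then p else 0) := by
    intro x
    have := cnt_const (α := wrd p q r z) (z := 0) (m := 1) x p
      (fun i hi1 hi2 => wrd_a hi1 (by omega))
    rw [this, h1]
  have h3 : ∀ x, cnt x (wrd p q r z) (1 + p + q) =
      (if (1:Fin 3) = x then 1 else 0) + (if (0:Fin 3) = x then p else 0)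
      + (if (1:Fin 3) = x then q else 0) := by
    intro x
    have := cnt_const (α := wrd p q r z) (z := 1) (m := 1 + p) x q
      (fun i hi1 hi2 => wrd_b hi1 (by omega))
    rw [this, h2]
  have h4 : ∀ x, cnt x (wrd p q r z) (1 + p + q + r) =
      (if (1:Fin 3) = x then 1 else 0) + (if (0:Fin 3) = x then p else 0)
      + (if (1:Fin 3) = x then q else 0) + (if (2:Fin 3) = x then r else 0) := by
    intro x
    have := cnt_const (α := wrd p q r z) (z := 2) (m := 1 + p + q) x r
      (fun i hi1 hi2 => wrd_c hi1 (by omega))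
    rw [this, h3]
  have h5 : ∀ x, cnt x (wrd p q r z) n =
      cnt x (wrd p q r z) (1 + p + q + r) + (if z = x then n - (1+p+q+r) else 0) := by
    intro x
    have := cnt_const (α := wrd p q r z) (z := z) (m := 1 + p + q + r) x (n - (1+p+q+r))
      (fun i hi1 hi2 => wrd_z hi1)
    rw [show 1+p+q+r + (n - (1+p+q+r)) = n by omega] at this
    rw [this]
  refine ⟨?_, ?_, ?_⟩ <;> rw [h5, h4] <;> simp

end WrdAux
section Positive

/-- Deterministic PA checking `cnt ℓx = cnt ℓy` at a position just after letter `ℓacc`,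
with infinitely many `ℓacc`. -/
def pa3 (ℓx ℓy ℓacc : Fin 3) : DetPA Bool (Fin 3) 2 ℕ where
  init := false
  trans := fun _ s =>
    (fun j => if (s = ℓx ∧ j = 0) ∨ (s = ℓy ∧ j = 1) then 1 else 0, s = ℓacc)
  acc := fun b => b = true
  C := {v | v 0 = v 1}

lemma pa3_semiLin (ℓx ℓy ℓacc : Fin 3) : SemiLin (pa3 ℓx ℓy ℓacc).C := by
  classical
  refine ⟨1, fun _ => 0, fun _ => {![1, 1]}, ?_⟩
  ext v
  simp only [pa3, Set.mem_setOf_eq, Set.mem_iUnion, LinSet]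
  constructor
  · intro h
    refine ⟨0, fun _ => v 0, ?_⟩
    rw [Finset.sum_singleton]
    funext j
    fin_cases j <;> simp [h] <;> omega
  · rintro ⟨_, z, hz⟩
    rw [Finset.sum_singleton] at hz
    rw [hz]
    simp

lemma pa3_stateAt (ℓx ℓy ℓacc : Fin 3) (α : ℕ → Fin 3) (i : ℕ) :
    (pa3 ℓx ℓy ℓacc).stateAt α (i + 1) = decide (α i = ℓacc) := by
  rw [stateAt_succ]
  rfl

lemma pa3_vecSum (ℓx ℓy ℓacc : Fin 3) (hxy : ℓx ≠ ℓy) (α : ℕ → Fin 3) (n : ℕ) :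
    (pa3 ℓx ℓy ℓacc).vecSum α 0 n 0 = cnt ℓx α n ∧
    (pa3 ℓx ℓy ℓacc).vecSum α 0 n 1 = cnt ℓy α n := by
  induction n with
  | zero =>
    constructor <;> simp [DetPA.vecSum]
  | succ n ih =>
    rw [vecSum_succ, cnt_succ, cnt_succ]
    have hstep : (pa3 ℓx ℓy ℓacc).step α n =
        fun j => if (α n = ℓx ∧ j = 0) ∨ (α n = ℓy ∧ j = 1) then 1 else 0 := rfl
    constructor <;> simp only [Pi.add_apply, hstep, ih.1, ih.2]
    · congr 1
      by_cases h : α n = ℓx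
      · simp [h]
      · simp [h]
    · congr 1
      by_cases h : α n = ℓy
      · simp [h]
      · have : ¬ ((1 : Fin 2) = 0) := by decide
        simp [h, this]

lemma pa3_lang (ℓx ℓy ℓacc : Fin 3) (hxy : ℓx ≠ ℓy) (hxa : ℓx ≠ ℓacc) (hya : ℓy ≠ ℓacc) :
    {β : ℕ → Fin 3 | ∃ n, β n = ℓacc ∧ cnt ℓx β n = cnt ℓy β n ∧
      ∀ m, ∃ i, m ≤ i ∧ β i = ℓacc} = {α | (pa3 ℓx ℓy ℓacc).ReachRegAccept α} := by
  ext β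
  simp only [Set.mem_setOf_eq]
  constructor
  · rintro ⟨n, hn, hcnt, hinf⟩
    constructor
    · refine ⟨n + 1, by omega, ?_, ?_⟩
      · rw [pa3_stateAt]
        simp [pa3, hn]
      · have h := pa3_vecSum ℓx ℓy ℓacc hxy β (n + 1)
        show _ = _
        rw [h.1, h.2, cnt_succ, cnt_succ, hn]
        simp [Ne.symm hxa, Ne.symm hya, hcnt]
    · intro m
      obtain ⟨i, hi1, hi2⟩ := hinf m
      refine ⟨i + 1, by omega, ?_⟩
      rw [pa3_stateAt]
      simp [pa3, hi2]
  · rintro ⟨⟨i, hi1, hacc, hC⟩, hinf⟩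
    obtain ⟨n, rfl⟩ : ∃ n, i = n + 1 := ⟨i - 1, by omega⟩
    rw [pa3_stateAt] at hacc
    have hn : β n = ℓacc := by
      simpa [pa3] using hacc
    have h := pa3_vecSum ℓx ℓy ℓacc hxy β (n + 1)
    have hC' : (pa3 ℓx ℓy ℓacc).vecSum β 0 (n+1) 0 = (pa3 ℓx ℓy ℓacc).vecSum β 0 (n+1) 1 := hC
    rw [h.1, h.2, cnt_succ, cnt_succ, hn] at hC'
    simp [Ne.symm hxa, Ne.symm hya] at hC'
    refine ⟨n, hn, hC', ?_⟩
    intro m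
    obtain ⟨i, hi1, hacc⟩ := hinf (m + 1)
    obtain ⟨k, rfl⟩ : ∃ k, i = k + 1 := ⟨i - 1, by omega⟩
    rw [pa3_stateAt] at hacc
    refine ⟨k, by omega, by simpa [pa3] using hacc⟩

lemma detReachReg_L14a : DetReachRegRecog L14a := by
  refine ⟨2, Bool, Bool.instFinite, pa3 0 1 2, pa3_semiLin 0 1 2, ?_⟩
  have := pa3_lang 0 1 2 (by decide) (by decide) (by decide)
  rw [← this]
  rfl

lemma detReachReg_L14b : DetReachRegRecog L14b := by
  refine ⟨2, Bool, Bool.instFinite, pa3 1 2 0, pa3_semiLin 1 2 0, ?_⟩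
  have := pa3_lang 1 2 0 (by decide) (by decide) (by decide)
  rw [← this]
  rfl

end Positive
section Membership

lemma wrd_prefix_eq' {p q q' r r' : ℕ} {z z' : Fin 3} {i : ℕ}
    (h : i < 1 + p + q) (h' : i < 1 + p + q') : wrd p q r z i = wrd p q' r' z' i := by
  unfold wrd
  split_ifs <;> first | rfl | omega

lemma mem_L14a_X (y : ℕ) : wrd (y+1) y 0 2 ∈ L14a := by
  have hc := wrd_cnt (p := y+1) (q := y) (r := 0) (z := 2) (n := 2*y+2) (by omega)
  refine ⟨2*y+2, wrd_z (by omega), ?_, ?_⟩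
  · have e0 : cnt 0 (wrd (y+1) y 0 2) (2*y+2) = cnt 1 (wrd (y+1) y 0 2) (2*y+2) := by
      rw [hc.1, hc.2.1]
      simp
      omega
    exact e0
  · intro m
    exact ⟨m + 2*y+2, by omega, wrd_z (by omega)⟩

lemma not_mem_L14a_X' (y p : ℕ) (hp : 1 ≤ p) : wrd (y+1) (y+p) 0 2 ∉ L14a := by
  rintro ⟨n, hn2, hcnt, -⟩
  have hn : 1 + (y+1) + (y+p) + 0 ≤ n := by
    by_contra hlt
    push_neg at hlt
    rcases Nat.eq_zero_or_pos n with h0 | h0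
    · rw [h0, wrd_at0] at hn2; exact absurd hn2 (by decide)
    · by_cases h1 : n < 1 + (y+1)
      · rw [wrd_a (by omega) h1] at hn2; exact absurd hn2 (by decide)
      · rw [wrd_b (by omega) (by omega)] at hn2; exact absurd hn2 (by decide)
  have hc := wrd_cnt (p := y+1) (q := y+p) (r := 0) (z := 2) (n := n) hn
  have hcnt' : cnt 0 (wrd (y+1) (y+p) 0 2) n = cnt 1 (wrd (y+1) (y+p) 0 2) n := hcnt
  rw [hc.1, hc.2.1] at hcnt'
  simp at hcnt'
  omega

lemma not_mem_L14b_X' (y q : ℕ) : wrd (y+1) q 0 2 ∉ L14b := by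
  rintro ⟨n, -, -, hinf⟩
  obtain ⟨i, hi, h0⟩ := hinf (1 + (y+1) + q)
  rw [wrd_z (by omega)] at h0
  exact absurd h0 (by decide)

lemma mem_L14b_W (y : ℕ) : wrd (y+1) y (y+1) 0 ∈ L14b := by
  have hc := wrd_cnt (p := y+1) (q := y) (r := y+1) (z := 0) (n := 3*y+3) (by omega)
  refine ⟨3*y+3, wrd_z (by omega), ?_, ?_⟩
  · have e0 : cnt 1 (wrd (y+1) y (y+1) 0) (3*y+3) = cnt 2 (wrd (y+1) y (y+1) 0) (3*y+3) := by
      rw [hc.2.1, hc.2.2]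
      simp
      omega
    exact e0
  · intro m
    exact ⟨m + 3*y+3, by omega, wrd_z (by omega)⟩

lemma not_mem_L14a_V (y r : ℕ) : wrd (y+1) y r 0 ∉ L14a := by
  rintro ⟨n, -, -, hinf⟩
  obtain ⟨i, hi, h2⟩ := hinf (1 + (y+1) + y + r)
  rw [wrd_z (by omega)] at h2
  exact absurd h2 (by decide)

lemma not_mem_L14b_V (y t : ℕ) (ht : 1 ≤ t) : wrd (y+1) y (y+1+t) 0 ∉ L14b := by
  rintro ⟨n, hn0, hcnt, -⟩
  have hcnt' : cnt 1 (wrd (y+1) y (y+1+t) 0) n = cnt 2 (wrd (y+1) y (y+1+t) 0) n := hcnt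
  have hcases : (1 ≤ n ∧ n < 1 + (y+1)) ∨ 1 + (y+1) + y + (y+1+t) ≤ n := by
    by_contra hc
    push_neg at hc
    rcases Nat.eq_zero_or_pos n with h0 | h0
    · rw [h0, wrd_at0] at hn0; exact absurd hn0 (by decide)
    · have h1 : 1 + (y+1) ≤ n := hc.1 h0
      by_cases h2 : n < 1 + (y+1) + y
      · rw [wrd_b (by omega) h2] at hn0; exact absurd hn0 (by decide)
      · rw [wrd_c (by omega) (by omega)] at hn0; exact absurd hn0 (by decide)
  rcases hcases with ⟨h1, h2⟩ | hbig
  · -- n in the initial a-block : cnt 1 = 1, cnt 2 = 0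
    obtain ⟨k, rfl⟩ : ∃ k, n = 1 + k := ⟨n - 1, by omega⟩
    have e1 : ∀ x, cnt x (wrd (y+1) y (y+1+t) 0) (1 + k) =
        cnt x (wrd (y+1) y (y+1+t) 0) 1 + (if (0 : Fin 3) = x then k else 0) :=
      fun x => cnt_const x k (fun i hi1 hi2 => wrd_a hi1 (by omega))
    have e2 : ∀ x, cnt x (wrd (y+1) y (y+1+t) 0) 1 = if (1 : Fin 3) = x then 1 else 0 := by
      intro x
      have := cnt_succ x (wrd (y+1) y (y+1+t) 0) 0
      refine this.trans ?_
      rw [cnt_zero, wrd_at0]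
      split_ifs <;> simp_all
    rw [e1, e1, e2, e2] at hcnt'
    simp at hcnt'
  · have hc := wrd_cnt (p := y+1) (q := y) (r := y+1+t) (z := 0) (n := n) hbig
    rw [hc.2.1, hc.2.2] at hcnt'
    simp at hcnt'
    omega

end Membership
section Negative

lemma not_detReachReg_union : ¬ DetReachRegRecog (L14a ∪ L14b) := by
  rintro ⟨d, Q, hQfin, A, -, hL⟩
  haveI := hQfin
  set y := Nat.card Q with hy
  set X : ℕ → Fin 3 := wrd (y+1) y 0 2 with hXdef
  have hXmem : X ∈ L14a ∪ L14b := Or.inl (mem_L14a_X y)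
  have hRR : A.ReachRegAccept X := by rwa [hL] at hXmem
  obtain ⟨⟨ℓ, hℓ1, hacc, hsum⟩, hinf⟩ := hRR
  by_cases hcase : ℓ ≤ 2*y + 2
  · -- witness within the b a^{y+1} b^y prefix : pump the b-block
    set F : Q → Q := fun q => (A.trans q 1).2 with hF
    obtain ⟨i, p, hiK, hp1, hpump⟩ := exists_period F (A.stateAt X (y+2))
    set X' : ℕ → Fin 3 := wrd (y+1) (y+p) 0 2 with hX'def
    have hpre : ∀ j, j < 2*y+2 → X j = X' j := by
      intro j hj
      exact wrd_prefix_eq' (by omega) (by omega)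
    -- state after the (pumped) b-block
    have hq2 : A.stateAt X' (y+2) = A.stateAt X (y+2) :=
      (stateAt_congr A hpre (y+2) (by omega)).symm
    have hbX : A.stateAt X ((y+2) + y) = F^[y] (A.stateAt X (y+2)) :=
      stateAt_block A y (fun j h1 h2 => wrd_b (by omega) (by omega))
    have hbX' : A.stateAt X' ((y+2) + (y+p)) = F^[y+p] (A.stateAt X' (y+2)) :=
      stateAt_block A (y+p) (fun j h1 h2 => wrd_b (by omega) (by omega))
    have hpmp : F^[y+p] (A.stateAt X (y+2)) = F^[y] (A.stateAt X (y+2)) := by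
      have := hpump y 1 (by omega)
      simpa using this
    have hsX : A.stateAt X (2*y+2) = A.stateAt X' (2*y+2+p) := by
      have e1 : (y+2) + y = 2*y+2 := by omega
      have e2 : (y+2) + (y+p) = 2*y+2+p := by omega
      rw [e1] at hbX
      rw [e2] at hbX'
      rw [hbX, hbX', hq2, hpmp]
    have htail : ∀ j, X (2*y+2 + j) = X' ((2*y+2+p) + j) := by
      intro j
      rw [hXdef, hX'def]
      rw [wrd_z (by omega), wrd_z (by omega)]
    have hinf' : A.InfAcc X' := infAcc_tail A hsX htail hinf
    have hstℓ : A.stateAt X' ℓ = A.stateAt X ℓ :=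
      (stateAt_congr A hpre ℓ (by omega)).symm
    have hRR' : A.ReachRegAccept X' := by
      refine ⟨⟨ℓ, hℓ1, ?_, ?_⟩, hinf'⟩
      · rw [hstℓ]; exact hacc
      · rw [vecSum_congr A (fun j hj => (hpre j hj).symm) (show ℓ ≤ 2*y+2 from hcase)]
        exact hsum
    have hX'mem : X' ∈ L14a ∪ L14b := by rw [hL]; exact hRR'
    rcases hX'mem with h | h
    · exact not_mem_L14a_X' y p hp1 h
    · exact not_mem_L14b_X' y (y+p) h
  · -- witness in the c-tail : swap to the a^ω word
    push_neg at hcase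
    set G : Q → Q := fun q => (A.trans q 2).2 with hG
    obtain ⟨i, p, hiK, hp1, hpump⟩ := exists_period G (A.stateAt X (2*y+2))
    set t : ℕ := p * ℓ with ht
    have ht1 : 1 ≤ t := by
      have : 1 ≤ ℓ := hℓ1
      calc 1 = 1 * 1 := by ring
      _ ≤ p * ℓ := Nat.mul_le_mul hp1 hℓ1
    have htℓ : ℓ ≤ 2*y+2+t := by
      have : ℓ ≤ p * ℓ := Nat.le_mul_of_pos_left ℓ (by omega)
      omega
    set W : ℕ → Fin 3 := wrd (y+1) y (y+1) 0 with hWdef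
    set V : ℕ → Fin 3 := wrd (y+1) y (y+1+t) 0 with hVdef
    have hWmem : W ∈ L14a ∪ L14b := Or.inr (mem_L14b_W y)
    have hRRW : A.ReachRegAccept W := by rwa [hL] at hWmem
    have hinfW : A.InfAcc W := hRRW.2
    have hpreW : ∀ j, j < 3*y+3 → X j = W j := by
      intro j hj
      exact wrd_prefix_eq2 (by omega)
    have hpreV : ∀ j, j < 3*y+3+t → X j = V j := by
      intro j hj
      exact wrd_prefix_eq2 (by omega)
    have hq3W : A.stateAt W (2*y+2) = A.stateAt X (2*y+2) :=
      (stateAt_congr A hpreW (2*y+2) (by omega)).symm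
    have hq3V : A.stateAt V (2*y+2) = A.stateAt X (2*y+2) :=
      (stateAt_congr A hpreV (2*y+2) (by omega)).symm
    have hbW : A.stateAt W ((2*y+2) + (y+1)) = G^[y+1] (A.stateAt W (2*y+2)) :=
      stateAt_block A (y+1) (fun j h1 h2 => wrd_c (by omega) (by omega))
    have hbV : A.stateAt V ((2*y+2) + (y+1+t)) = G^[y+1+t] (A.stateAt V (2*y+2)) :=
      stateAt_block A (y+1+t) (fun j h1 h2 => wrd_c (by omega) (by omega))
    have hpmp : G^[y+1+t] (A.stateAt X (2*y+2)) = G^[y+1] (A.stateAt X (2*y+2)) := by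
      have := hpump (y+1) ℓ (by omega)
      have e : y + 1 + p * ℓ = y+1+t := by omega
      rwa [e] at this
    have hsWV : A.stateAt W (3*y+3) = A.stateAt V (3*y+3+t) := by
      have e1 : (2*y+2) + (y+1) = 3*y+3 := by omega
      have e2 : (2*y+2) + (y+1+t) = 3*y+3+t := by omega
      rw [e1] at hbW
      rw [e2] at hbV
      rw [hbW, hbV, hq3W, hq3V, hpmp]
    have htail : ∀ j, W (3*y+3 + j) = V ((3*y+3+t) + j) := by
      intro j
      rw [hWdef, hVdef]
      rw [wrd_z (by omega), wrd_z (by omega)]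
    have hinfV : A.InfAcc V := infAcc_tail A hsWV htail hinfW
    have hstℓ : A.stateAt V ℓ = A.stateAt X ℓ :=
      (stateAt_congr A hpreV ℓ (by omega)).symm
    have hRRV : A.ReachRegAccept V := by
      refine ⟨⟨ℓ, hℓ1, ?_, ?_⟩, hinfV⟩
      · rw [hstℓ]; exact hacc
      · rw [vecSum_congr A (fun j hj => (hpreV j hj).symm) (show ℓ ≤ 3*y+3+t by omega)]
        exact hsum
    have hVmem : V ∈ L14a ∪ L14b := by rw [hL]; exact hRRV
    rcases hVmem with h | h
    · exact not_mem_L14a_V y (y+1+t) h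
    · exact not_mem_L14b_V y t ht1 h

end Negative

/-- `L₁` and `L₂` are deterministic reachability-regular PA recognizable,
but `L₁ ∪ L₂` is not, so the class is not closed under union. -/
theorem detReachReg_not_closed_union :
    DetReachRegRecog L14a ∧ DetReachRegRecog L14b ∧
    ¬ DetReachRegRecog (L14a ∪ L14b) := by
  exact ⟨detReachReg_L14a, detReachReg_L14b, not_detReachReg_union⟩
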